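/- Let ω be irrational with the G-property and satisfying the Diophantine condition of order ν, and let u(t) = h(ωt, t) where h : ℝ² → E is 1-periodic in each variable and satisfies the Hölder conditions |h(t₁,s) − h(t₂,s)| ≤ C_h|t₁ − t₂|^{α₁} and |h(t,s₁) − h(t,s₂)| ≤ C_h|s₁ − s₂|^{α₂} (for arguments at distance ≤ ε₀), with α = max{α₁, α₂}. Then there is a constant K > 0 such that for all sufficiently small ε > 0 the minimal inclusion length satisfies l_u(ε) ≤ K(1/ε)^{(1+ν)/α}; in particular 𝔇𝔦(u) ≤ (1+ν)/α. -/

import Mathlib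

set_option maxHeartbeats 1000000
open Filter Set


/-- `τ` is an `ε`-almost period of `u`. -/
def IsAlmostPeriod {E : Type*} [NormedAddCommGroup E] (u : ℝ → E) (ε τ : ℝ) : Prop :=
  ∀ t : ℝ, ‖u (t + τ) - u t‖ ≤ ε

/-- `L` is an inclusion length for `ε`-almost periods of `u`. -/
def IsInclusionLength {E : Type*} [NormedAddCommGroup E] (u : ℝ → E) (ε L : ℝ) : Prop :=
  0 < L ∧ ∀ a : ℝ, ∃ τ ∈ Set.Icc a (a + L), IsAlmostPeriod u ε τ

/-- The minimal inclusion length `l_u(ε)` for `ε`-almost periods of `u`. -/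
noncomputable def inclusionLength {E : Type*} [NormedAddCommGroup E] (u : ℝ → E) (ε : ℝ) : ℝ :=
  sInf {L | IsInclusionLength u ε L}

/-- `u` is uniformly almost periodic. -/
def AlmostPeriodic {E : Type*} [NormedAddCommGroup E] (u : ℝ → E) : Prop :=
  Continuous u ∧ ∀ ε > 0, ∃ L, IsInclusionLength u ε L

/-- The Diophantine dimension `𝔇𝔦(u) = limsup_{ε→0+} ln l_u(ε)/ln(1/ε)`. -/
noncomputable def diophDim {E : Type*} [NormedAddCommGroup E] (u : ℝ → E) : ℝ :=
  Filter.limsup (fun ε : ℝ => Real.log (inclusionLength u ε) / Real.log (1 / ε)) (nhdsWithin 0 (Set.Ioi 0))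

/-- The lower Diophantine dimension `𝔡𝔦(u) = liminf_{ε→0+} ln l_u(ε)/ln(1/ε)`. -/
noncomputable def lowerDiophDim {E : Type*} [NormedAddCommGroup E] (u : ℝ → E) : ℝ :=
  Filter.liminf (fun ε : ℝ => Real.log (inclusionLength u ε) / Real.log (1 / ε)) (nhdsWithin 0 (Set.Ioi 0))

/-- The Gauss map `G(x) = 1/x − ⌊1/x⌋`. -/
noncomputable def gaussMap (x : ℝ) : ℝ := 1 / x - ⌊(1 / x : ℝ)⌋

/-- The Gauss iterates `ω_k` of `ω`: `ω₀ = ω − ⌊ω⌋`, `ω_{k+1} = G(ω_k)`. -/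
noncomputable def cfOmega (ω : ℝ) : ℕ → ℝ
  | 0 => ω - ⌊ω⌋
  | k + 1 => gaussMap (cfOmega ω k)

/-- The partial quotients `a_k` of the continued fraction of `ω`. -/
noncomputable def cfA (ω : ℝ) : ℕ → ℤ
  | 0 => ⌊ω⌋
  | k + 1 => ⌊(1 / cfOmega ω k : ℝ)⌋

/-- The numerators `p_k` of the convergents of `ω`. -/
noncomputable def cfP (ω : ℝ) : ℕ → ℤ
  | 0 => cfA ω 0
  | 1 => cfA ω 1 * cfA ω 0 + 1
  | k + 2 => cfA ω (k + 2) * cfP ω (k + 1) + cfP ω k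

/-- The denominators `q_k` of the convergents of `ω`. -/
noncomputable def cfQ (ω : ℝ) : ℕ → ℤ
  | 0 => 1
  | 1 => cfA ω 1
  | k + 2 => cfA ω (k + 2) * cfQ ω (k + 1) + cfQ ω k

/-- `ω` satisfies the Diophantine condition of order `ν`: there is `C > 0` with
`|ω − p/q| ≥ C/q^(2+ν)` for all integers `p` and naturals `q ≥ 1`. -/
def DiophCond (ω ν : ℝ) : Prop :=
  ∃ C > 0, ∀ (q : ℕ) (p : ℤ), 0 < q → C / (q : ℝ) ^ (2 + ν) ≤ |ω - (p : ℝ) / (q : ℝ)|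

/-- `ω` has the `G`-property: there is `C > 1` with `q_{k+1} ≥ C·q_k` for all `k ≥ 1`. -/
def GProperty (ω : ℝ) : Prop :=
  ∃ C > 1, ∀ k : ℕ, 1 ≤ k → C * (cfQ ω k : ℝ) ≤ (cfQ ω (k + 1) : ℝ)



private lemma fract_sub' (a b : ℝ) : Int.fract (a - b) = Int.fract (Int.fract a - Int.fract b) := by
  have h : a - b = (Int.fract a - Int.fract b) + ((⌊a⌋ - ⌊b⌋ : ℤ) : ℝ) := by
    rw [Int.fract, Int.fract]; push_cast; ring
  rw [h, Int.fract_add_intCast]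

private lemma nd_pos {θ : ℝ} (hθ : Irrational θ) {n : ℤ} (hn : n ≠ 0) :
    0 < |(n : ℝ) * θ - round ((n : ℝ) * θ)| := by
  rw [abs_pos, sub_ne_zero]
  exact fun hc => (hθ.intCast_mul hn).ne_int _ hc

private lemma fract_pos_case {θ : ℝ} (q : ℕ) (h0 : 0 < (q:ℝ)*θ - round ((q:ℝ)*θ)) :
    Int.fract ((q:ℝ)*θ) = (q:ℝ)*θ - round ((q:ℝ)*θ) := by
  have hb : |(q:ℝ)*θ - round ((q:ℝ)*θ)| ≤ 1/2 := abs_sub_round _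
  rw [abs_le] at hb
  have h1 : Int.fract ((q:ℝ)*θ) = Int.fract ((q:ℝ)*θ - (round ((q:ℝ)*θ) : ℤ)) :=
    (Int.fract_sub_intCast _ _).symm
  rw [h1, Int.fract_eq_self.mpr ⟨h0.le, by linarith [hb.2]⟩]

private lemma fract_neg_case {θ : ℝ} (q : ℕ) (h0 : (q:ℝ)*θ - round ((q:ℝ)*θ) < 0) :
    Int.fract (((-(q:ℤ) : ℤ):ℝ)*θ) = -((q:ℝ)*θ - round ((q:ℝ)*θ)) := by
  have hb : |(q:ℝ)*θ - round ((q:ℝ)*θ)| ≤ 1/2 := abs_sub_round _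
  rw [abs_le] at hb
  have h1 : ((-(q:ℤ) : ℤ):ℝ)*θ = (-((q:ℝ)*θ - round ((q:ℝ)*θ))) + ((-(round ((q:ℝ)*θ)) : ℤ) : ℝ) := by
    push_cast; ring
  rw [h1, Int.fract_add_intCast, Int.fract_eq_self.mpr ⟨by linarith, by linarith [hb.1]⟩]

private lemma circle_lemma {θ : ℝ} (hθ : Irrational θ) {q₁ q₂ : ℕ}
    (hq₁ : 0 < q₁) (hq12 : q₁ < q₂)
    (hlt : |(q₂:ℝ)*θ - round ((q₂:ℝ)*θ)| < |(q₁:ℝ)*θ - round ((q₁:ℝ)*θ)|)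
    (halt : ((q₁:ℝ)*θ - round ((q₁:ℝ)*θ)) * ((q₂:ℝ)*θ - round ((q₂:ℝ)*θ)) < 0)
    (x : ℝ) :
    ∃ j : ℕ, j < q₁ + q₂ ∧ Int.fract (x - j*θ) ≤ |(q₁:ℝ)*θ - round ((q₁:ℝ)*θ)| := by
  set β₁ := (q₁:ℝ)*θ - round ((q₁:ℝ)*θ) with hβ₁
  set β₂ := (q₂:ℝ)*θ - round ((q₂:ℝ)*θ) with hβ₂
  set N := q₁ + q₂ with hN
  have hNpos : 0 < N := by omega
  obtain ⟨j₀, hj₀mem, hj₀min⟩ :=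
    (Finset.range N).exists_min_image (fun j : ℕ => Int.fract (x - j*θ))
      ⟨0, Finset.mem_range.mpr hNpos⟩
  have hj₀N : j₀ < N := Finset.mem_range.mp hj₀mem
  refine ⟨j₀, hj₀N, ?_⟩
  by_contra hgt
  push_neg at hgt
  have h1cast : ((q₁:ℤ):ℝ) = (q₁:ℝ) := by push_cast; ring
  have h1pos : (0:ℝ) < |β₁| := by
    have := nd_pos hθ (n := (q₁:ℤ)) (by exact_mod_cast hq₁.ne')
    rwa [h1cast] at this
  have obtain_r :
      ∃ r : ℤ, 0 ≤ (j₀ : ℤ) + r ∧ (j₀ : ℤ) + r < (N:ℤ) ∧ 0 < Int.fract ((r:ℝ)*θ) ∧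
        Int.fract ((r:ℝ)*θ) ≤ |β₁| := by
    rcases lt_or_gt_of_ne (abs_pos.mp h1pos) with hneg | hpos
    · -- β₁ < 0, hence β₂ > 0
      have h2pos : 0 < β₂ := by nlinarith
      by_cases hcase : q₁ ≤ j₀
      · refine ⟨-(q₁:ℤ), by omega, by push_cast; omega, ?_, ?_⟩
        · rw [fract_neg_case q₁ (hβ₁ ▸ hneg)]; linarith
        · rw [fract_neg_case q₁ (hβ₁ ▸ hneg), ← hβ₁, abs_of_neg hneg]
      · refine ⟨(q₂:ℤ), by omega, by push_cast; omega, ?_, ?_⟩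
        · rw [show (((q₂:ℤ):ℝ)) = (q₂:ℝ) by push_cast; ring, fract_pos_case q₂ h2pos]; exact h2pos
        · rw [show (((q₂:ℤ):ℝ)) = (q₂:ℝ) by push_cast; ring, fract_pos_case q₂ h2pos, ← hβ₂]
          calc β₂ = |β₂| := (abs_of_pos h2pos).symm
          _ ≤ |β₁| := hlt.le
    · -- β₁ > 0, hence β₂ < 0
      have h2neg : β₂ < 0 := by nlinarith
      by_cases hcase : (j₀:ℤ) + q₁ < N
      · refine ⟨(q₁:ℤ), by omega, hcase, ?_, ?_⟩
        · rw [h1cast, fract_pos_case q₁ (hβ₁ ▸ hpos)]; exact hpos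
        · rw [h1cast, fract_pos_case q₁ (hβ₁ ▸ hpos), ← hβ₁]; exact (abs_of_pos hpos).ge
      · have hq₂le : q₂ ≤ j₀ := by push_cast at hcase; omega
        refine ⟨-(q₂:ℤ), by omega, by omega, ?_, ?_⟩
        · rw [fract_neg_case q₂ h2neg]; linarith
        · rw [fract_neg_case q₂ h2neg, ← hβ₂]
          calc -β₂ = |β₂| := (abs_of_neg h2neg).symm
          _ ≤ |β₁| := hlt.le
  obtain ⟨r, hr0, hrN, hg_pos, hg_le⟩ := obtain_r
  set j' := ((j₀ : ℤ) + r).toNat with hj'def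
  have hj'cast : ((j' : ℤ)) = (j₀ : ℤ) + r := Int.toNat_of_nonneg hr0
  have hj'mem : j' ∈ Finset.range N := by
    refine Finset.mem_range.mpr ?_
    have : (j' : ℤ) < (N : ℤ) := by rw [hj'cast]; exact hrN
    exact_mod_cast this
  have hsplit : x - (j' : ℝ)*θ = (x - (j₀:ℝ)*θ) - (r:ℝ)*θ := by
    have : ((j' : ℝ)) = (j₀ : ℝ) + (r : ℝ) := by exact_mod_cast congrArg (Int.cast : ℤ → ℝ) hj'cast
    rw [this]; ring
  have hval : Int.fract (x - (j':ℝ)*θ) = Int.fract (x - (j₀:ℝ)*θ) - Int.fract ((r:ℝ)*θ) := by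
    rw [hsplit, fract_sub' (x - (j₀:ℝ)*θ) ((r:ℝ)*θ)]
    exact Int.fract_eq_self.mpr ⟨by linarith,
      by linarith [Int.fract_lt_one (x - (j₀:ℝ)*θ)]⟩
  have hmin := hj₀min j' hj'mem
  rw [hval] at hmin
  linarith

private noncomputable def ndist (θ : ℝ) (m : ℕ) : ℝ := |(m:ℝ)*θ - round ((m:ℝ)*θ)|

private lemma ndist_pos {θ : ℝ} (hθ : Irrational θ) {m : ℕ} (hm : 0 < m) : 0 < ndist θ m := by
  rw [ndist, abs_pos, sub_ne_zero]
  intro hc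
  exact (hθ.natCast_mul hm.ne').ne_int _ hc

private lemma ndist_le {θ : ℝ} (m : ℕ) (z : ℤ) : ndist θ m ≤ |(m:ℝ)*θ - z| := round_le _ _

-- existence of better approximants
private lemma exists_better {θ : ℝ} (hθ : Irrational θ) (q : ℕ) (hq : 0 < q) :
    ∃ q' : ℕ, 0 < q' ∧ ndist θ q' < ndist θ q := by
  have hpos : 0 < ndist θ q := ndist_pos hθ hq
  obtain ⟨n, hn⟩ := exists_nat_gt (1 / ndist θ q)
  have hnpos : 0 < n := by
    by_contra hc
    push_neg at hc
    interval_cases n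
    · simp at hn; linarith [one_div_pos.mpr hpos]
  obtain ⟨j, k, hk0, hkn, hjk⟩ := Real.exists_int_int_abs_mul_sub_le θ hnpos
  refine ⟨k.toNat, by omega, ?_⟩
  have hcast : ((k.toNat : ℕ) : ℝ) = (k : ℝ) := by
    exact_mod_cast congrArg (Int.cast : ℤ → ℝ) (Int.toNat_of_nonneg hk0.le)
  calc ndist θ k.toNat ≤ |((k.toNat : ℕ):ℝ)*θ - j| := ndist_le _ _
    _ = |(k:ℝ)*θ - j| := by rw [hcast]
    _ ≤ 1/((n:ℝ)+1) := hjk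
    _ < ndist θ q := by
        rw [div_lt_iff₀ (by positivity)]
        rw [div_lt_iff₀ hpos] at hn
        nlinarith [hpos]


private lemma exists_best_seq {θ : ℝ} (hθ : Irrational θ) :
    ∃ S : ℕ → ℕ, S 0 = 1 ∧ (∀ k, 0 < S k) ∧ (∀ k, ndist θ (S (k+1)) < ndist θ (S k)) ∧
      (∀ k m, 0 < m → ndist θ m < ndist θ (S k) → S (k+1) ≤ m) := by
  classical
  let f : {m : ℕ // 0 < m} → {m : ℕ // 0 < m} := fun p =>
    ⟨Nat.find (exists_better hθ p.1 p.2), (Nat.find_spec (exists_better hθ p.1 p.2)).1⟩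
  let s : ℕ → {m : ℕ // 0 < m} := fun k => Nat.rec ⟨1, Nat.one_pos⟩ (fun _ p => f p) k
  refine ⟨fun k => (s k).1, rfl, fun k => (s k).2, ?_, ?_⟩
  · intro k
    exact (Nat.find_spec (exists_better hθ (s k).1 (s k).2)).2
  · intro k m hm hlt
    exact Nat.find_min' _ ⟨hm, hlt⟩

private lemma dense_small_norm (θ : ℝ) (hθ : Irrational θ) (ν : ℝ) (hν : 0 ≤ ν)
    (C : ℝ) (hC : 0 < C)
    (hD : ∀ (q : ℕ) (p : ℤ), 0 < q → C / (q:ℝ) ^ (2+ν) ≤ |θ - (p:ℝ)/(q:ℝ)|) :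
    ∃ K > 0, ∀ δ : ℝ, 0 < δ → δ ≤ 1/2 → ∀ a : ℝ, ∃ n : ℤ,
      a ≤ (n:ℝ) ∧ (n:ℝ) ≤ a + K * (1/δ)^(1+ν) ∧ |(n:ℝ)*θ - round ((n:ℝ)*θ)| ≤ δ := by
  classical
  refine ⟨1 + 1/C, by positivity, ?_⟩
  intro δ hδ hδ2 a
  obtain ⟨S, hS0, hSpos, hdec, hmin'⟩ := exists_best_seq hθ
  have hJ3 : ∀ k m, 0 < m → m < S (k+1) → ndist θ (S k) ≤ ndist θ m := by
    intro k m hm hmlt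
    by_contra hc
    push_neg at hc
    exact absurd (hmin' k m hm hc) (by omega)
  have hI4 : ∀ k m, 0 < m → m ≤ S k → ndist θ (S k) ≤ ndist θ m := by
    intro k m hm hle
    cases k with
    | zero =>
      have hm1 : m = 1 := by rw [hS0] at hle; omega
      rw [hm1, hS0]
    | succ k =>
      by_contra hc
      push_neg at hc
      have h1 : ndist θ m < ndist θ (S k) := hc.trans (hdec k)
      have h2 := hmin' k m hm h1
      have h3 : m = S (k+1) := le_antisymm hle h2
      rw [h3] at hc
      exact lt_irrefl _ hc
  have hsmono : ∀ k, S k < S (k+1) := by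
    intro k
    by_contra hc
    push_neg at hc
    exact absurd (hI4 k (S (k+1)) (hSpos (k+1)) hc) (not_le.mpr (hdec k))
  have hsge : ∀ k, k + 1 ≤ S k := by
    intro k
    induction k with
    | zero => simp [hS0]
    | succ k ih => have := hsmono k; omega
  have hua : ∀ k, ndist θ (S k) ≤ 1 / (S (k+1) : ℝ) := by
    intro k
    have h2le : 2 ≤ S (k+1) := by have := hsmono k; have := hSpos k; omega
    have hnpos : 0 < S (k+1) - 1 := by omega
    obtain ⟨j, c, hc0, hcn, hjc⟩ := Real.exists_int_int_abs_mul_sub_le θ hnpos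
    have hccast : ((c.toNat : ℕ) : ℝ) = (c : ℝ) :=
      mod_cast congrArg (Int.cast : ℤ → ℝ) (Int.toNat_of_nonneg hc0.le)
    have hclt : c.toNat < S (k+1) := by omega
    have hcpos : 0 < c.toNat := by omega
    have hcast2 : ((S (k+1) - 1 : ℕ) : ℝ) + 1 = (S (k+1) : ℝ) := by
      push_cast [Nat.cast_sub (by omega : 1 ≤ S (k+1))]
      ring
    calc ndist θ (S k) ≤ ndist θ c.toNat := hJ3 k c.toNat hcpos hclt
      _ ≤ |((c.toNat : ℕ):ℝ)*θ - j| := ndist_le _ _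
      _ = |(c:ℝ)*θ - j| := by rw [hccast]
      _ ≤ 1 / (((S (k+1) - 1 : ℕ):ℝ) + 1) := hjc
      _ = 1 / (S (k+1) : ℝ) := by rw [hcast2]
  have halt : ∀ k, ((S k:ℝ)*θ - round ((S k:ℝ)*θ)) * ((S (k+1):ℝ)*θ - round ((S (k+1):ℝ)*θ)) < 0 := by
    intro k
    set b₁ := (S k:ℝ)*θ - round ((S k:ℝ)*θ) with hb₁
    set b₂ := (S (k+1):ℝ)*θ - round ((S (k+1):ℝ)*θ) with hb₂
    have h1pos : 0 < |b₁| := ndist_pos hθ (hSpos k)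
    have h2pos : 0 < |b₂| := ndist_pos hθ (hSpos (k+1))
    have habs : |b₂| < |b₁| := hdec k
    by_contra hc
    push_neg at hc
    -- same sign
    set m := S (k+1) - S k with hm
    have hmpos : 0 < m := by have := hsmono k; omega
    have hmlt : m < S (k+1) := by have := hSpos k; omega
    have hmcast : ((m:ℕ):ℝ) = (S (k+1):ℝ) - (S k:ℝ) := by
      rw [hm, Nat.cast_sub (hsmono k).le]
    have hnd : ndist θ m ≤ |b₂ - b₁| := by
      calc ndist θ m ≤ |(m:ℝ)*θ - ((round ((S (k+1):ℝ)*θ) - round ((S k:ℝ)*θ) : ℤ) : ℝ)| :=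
            ndist_le _ _
        _ = |b₂ - b₁| := by rw [hmcast, hb₁, hb₂]; push_cast; ring_nf
    have hlt2 : |b₂ - b₁| < |b₁| := by
      rw [abs_sub_lt_iff]
      constructor <;>
      · rcases abs_cases b₁ with ⟨e1, s1⟩ | ⟨e1, s1⟩ <;>
          rcases abs_cases b₂ with ⟨e2, s2⟩ | ⟨e2, s2⟩ <;>
          nlinarith [h1pos, h2pos, habs, hc]
    have := hJ3 k m hmpos hmlt
    have : ndist θ (S k) < ndist θ (S k) := by
      calc ndist θ (S k) ≤ ndist θ m := hJ3 k m hmpos hmlt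
        _ ≤ |b₂ - b₁| := hnd
        _ < |b₁| := hlt2
        _ = ndist θ (S k) := rfl
    exact lt_irrefl _ this
  -- choose minimal k with ndist (S k) ≤ δ
  have hexk : ∃ k, ndist θ (S k) ≤ δ := by
    obtain ⟨n, hn⟩ := exists_nat_gt (1/δ)
    refine ⟨n, ?_⟩
    have h1 : ndist θ (S n) ≤ 1 / (S (n+1) : ℝ) := hua n
    have h2 : (n:ℝ) + 2 ≤ (S (n+1) : ℝ) := by exact_mod_cast hsge (n+1)
    have h3 : 1 / (S (n+1) : ℝ) ≤ 1 / ((n:ℝ)+2) := by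
      apply one_div_le_one_div_of_le (by positivity) h2
    have h4 : 1 / ((n:ℝ)+2) ≤ δ := by
      rw [div_le_iff₀ (by positivity)]
      rw [div_lt_iff₀ hδ] at hn
      nlinarith
    linarith
  set kδ := Nat.find hexk with hkδ
  have hQ : ndist θ (S kδ) ≤ δ := Nat.find_spec hexk
  have hq₁bound : (S kδ : ℝ) ≤ 1/δ := by
    by_cases hk0 : kδ = 0
    · rw [hk0, hS0, le_div_iff₀ hδ]
      push_cast
      linarith
    · have hkpos : 0 < kδ := Nat.pos_of_ne_zero hk0
      have hnot : ¬ ndist θ (S (kδ - 1)) ≤ δ := Nat.find_min hexk (by omega)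
      push_neg at hnot
      have h1 : ndist θ (S (kδ - 1)) ≤ 1 / (S (kδ - 1 + 1) : ℝ) := hua (kδ - 1)
      have hk' : kδ - 1 + 1 = kδ := by omega
      rw [hk'] at h1
      have h2 : δ < 1 / (S kδ : ℝ) := lt_of_lt_of_le hnot h1
      rw [lt_div_iff₀ (by exact_mod_cast hSpos kδ)] at h2
      rw [le_div_iff₀ hδ]
      linarith
  -- Diophantine lower bound on ndist (S kδ)
  have hlow : C / (S kδ : ℝ) ^ ((1:ℝ)+ν) ≤ ndist θ (S kδ) := by
    set q₁ := S kδ with hq₁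
    have hq₁pos : (0:ℝ) < q₁ := by exact_mod_cast hSpos kδ
    have hD' := hD q₁ (round ((q₁:ℝ)*θ)) (hSpos kδ)
    have heq : (q₁:ℝ) * |θ - (round ((q₁:ℝ)*θ) : ℝ)/(q₁:ℝ)| = ndist θ q₁ := by
      rw [ndist, ← abs_of_pos hq₁pos, ← abs_mul]
      congr 1
      field_simp
      rw [abs_of_pos hq₁pos]
    have hrpow : ((q₁:ℝ)) ^ ((2:ℝ)+ν) = (q₁:ℝ) ^ ((1:ℝ)+ν) * (q₁:ℝ) := by
      rw [show (2:ℝ)+ν = ((1:ℝ)+ν) + 1 by ring, Real.rpow_add hq₁pos, Real.rpow_one]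
    have hpow_pos : (0:ℝ) < (q₁:ℝ) ^ ((1:ℝ)+ν) := Real.rpow_pos_of_pos hq₁pos _
    calc C / (q₁:ℝ) ^ ((1:ℝ)+ν) = (q₁:ℝ) * (C / ((q₁:ℝ) ^ ((2:ℝ)+ν))) := by
          rw [hrpow]; field_simp
      _ ≤ (q₁:ℝ) * |θ - (round ((q₁:ℝ)*θ) : ℝ)/(q₁:ℝ)| := by
          apply mul_le_mul_of_nonneg_left hD' hq₁pos.le
      _ = ndist θ q₁ := heq
  have hq₂bound : (S (kδ+1) : ℝ) ≤ (1/C) * (1/δ) ^ ((1:ℝ)+ν) := by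
    have hq₂pos : (0:ℝ) < (S (kδ+1):ℝ) := by exact_mod_cast hSpos (kδ+1)
    have h1 : C / (S kδ : ℝ) ^ ((1:ℝ)+ν) ≤ 1 / (S (kδ+1) : ℝ) := le_trans hlow (hua kδ)
    have hq₁pos : (0:ℝ) < (S kδ:ℝ) := by exact_mod_cast hSpos kδ
    have hpow_pos : (0:ℝ) < (S kδ:ℝ) ^ ((1:ℝ)+ν) := Real.rpow_pos_of_pos hq₁pos _
    rw [div_le_div_iff₀ hpow_pos hq₂pos] at h1
    have h2 : (S kδ:ℝ) ^ ((1:ℝ)+ν) ≤ (1/δ) ^ ((1:ℝ)+ν) :=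
      Real.rpow_le_rpow hq₁pos.le hq₁bound (by linarith)
    calc (S (kδ+1) : ℝ) = (C * (S (kδ+1):ℝ)) / C := by field_simp
      _ ≤ (1/δ) ^ ((1:ℝ)+ν) / C := by
          apply (div_le_div_iff_of_pos_right hC).mpr
          linarith
      _ = (1/C) * (1/δ) ^ ((1:ℝ)+ν) := by ring
  have hNbound : ((S kδ : ℝ) + (S (kδ+1) : ℝ)) ≤ (1 + 1/C) * (1/δ) ^ ((1:ℝ)+ν) := by
    have hd1 : (1:ℝ) ≤ 1/δ := by
      rw [le_div_iff₀ hδ]; linarith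
    have h1 : (1/δ : ℝ) ≤ (1/δ) ^ ((1:ℝ)+ν) := by
      nth_rewrite 1 [← Real.rpow_one (1/δ)]
      exact Real.rpow_le_rpow_of_exponent_le hd1 (by linarith)
    have h2 : (S kδ : ℝ) ≤ (1/δ) ^ ((1:ℝ)+ν) := le_trans hq₁bound h1
    linarith [hq₂bound]
  -- apply circle_lemma
  set n₀ := ⌈a⌉ with hn₀
  obtain ⟨j, hjN, hjfr⟩ := circle_lemma hθ (hSpos kδ) (hsmono kδ) (hdec kδ) (halt kδ)
    (-(n₀:ℝ)*θ)
  have hQδ : ndist θ (S kδ) ≤ δ := hQ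
  have hfr2 : Int.fract (-(n₀:ℝ)*θ - (j:ℕ)*θ) ≤ δ := le_trans hjfr hQδ
  refine ⟨n₀ + j, ?_, ?_, ?_⟩
  · have h1 : a ≤ (n₀:ℝ) := Int.le_ceil a
    push_cast
    have h2 : (0:ℝ) ≤ (j:ℝ) := Nat.cast_nonneg j
    linarith
  · have h1 : (n₀:ℝ) < a + 1 := Int.ceil_lt_add_one a
    have h2 : (j:ℝ) ≤ (S kδ : ℝ) + (S (kδ+1) : ℝ) - 1 := by
      have : (j:ℝ) + 1 ≤ ((S kδ + S (kδ+1) : ℕ) : ℝ) := by exact_mod_cast hjN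
      push_cast at this
      linarith
    push_cast
    linarith [hNbound]
  · set y := -(n₀:ℝ)*θ - (j:ℕ)*θ with hy
    have hval : ((n₀ + (j:ℕ) : ℤ):ℝ)*θ = -y := by rw [hy]; push_cast; ring
    have hF0 : 0 ≤ Int.fract y := Int.fract_nonneg y
    have hkey : |((n₀ + (j:ℕ) : ℤ):ℝ)*θ - ((-⌊y⌋ : ℤ):ℝ)| = Int.fract y := by
      rw [hval]
      rw [show -y - ((-⌊y⌋ : ℤ):ℝ) = -(y - (⌊y⌋:ℝ)) by push_cast; ring, abs_neg]
      rw [Int.self_sub_floor]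
      exact abs_of_nonneg hF0
    calc |((n₀ + (j:ℕ) : ℤ):ℝ)*θ - round (((n₀ + (j:ℕ) : ℤ):ℝ)*θ)|
        ≤ |((n₀ + (j:ℕ) : ℤ):ℝ)*θ - ((-⌊y⌋ : ℤ):ℝ)| := round_le _ _
      _ = Int.fract y := hkey
      _ ≤ δ := hfr2

private lemma periodic_int_shift {α : Type*} (g : ℝ → α) (hg : ∀ t, g (t + 1) = g t)
    (m : ℤ) (t : ℝ) : g (t + m) = g t := by
  have hper : Function.Periodic g 1 := hg
  have := (hper.int_mul m) t
  simpa using this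

private lemma dioph_inv {ω ν C : ℝ} (hω : Irrational ω) (hν : 0 ≤ ν) (hC : 0 < C)
    (hD : ∀ (q : ℕ) (p : ℤ), 0 < q → C / (q:ℝ) ^ (2+ν) ≤ |ω - (p:ℝ)/(q:ℝ)|) :
    ∃ C' > 0, ∀ (q : ℕ) (p : ℤ), 0 < q → C' / (q:ℝ) ^ (2+ν) ≤ |ω⁻¹ - (p:ℝ)/(q:ℝ)| := by
  have hω0 : ω ≠ 0 := hω.ne_zero
  have hWpos : (0:ℝ) < |ω| := abs_pos.mpr hω0
  have hωi0 : ω⁻¹ ≠ 0 := inv_ne_zero hω0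
  have hMpos : (0:ℝ) < |ω⁻¹| + 1 := by positivity
  set M := |ω⁻¹| + 1 with hM
  have hMp : (0:ℝ) < M ^ ((1:ℝ)+ν) := Real.rpow_pos_of_pos hMpos _
  refine ⟨min (min 1 |ω⁻¹|) (C / (|ω| * M ^ ((1:ℝ)+ν))), by positivity, ?_⟩
  intro q p hq
  set C' := min (min 1 |ω⁻¹|) (C / (|ω| * M ^ ((1:ℝ)+ν))) with hC'
  have hqR : (0:ℝ) < (q:ℝ) := by exact_mod_cast hq
  have hq1 : (1:ℝ) ≤ (q:ℝ) := by exact_mod_cast hq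
  have hqpow : (1:ℝ) ≤ (q:ℝ) ^ ((2:ℝ)+ν) := by
    rw [show (1:ℝ) = (q:ℝ) ^ (0:ℝ) by rw [Real.rpow_zero]]
    exact Real.rpow_le_rpow_of_exponent_le hq1 (by linarith)
  have hqpow_pos : (0:ℝ) < (q:ℝ) ^ ((2:ℝ)+ν) := by linarith
  have hC'pos : (0:ℝ) < C' := by rw [hC']; positivity
  by_cases hfar : 1 ≤ |ω⁻¹ - (p:ℝ)/(q:ℝ)|
  · calc C' / (q:ℝ) ^ ((2:ℝ)+ν) ≤ C' / 1 := by
          apply div_le_div_of_nonneg_left hC'pos.le one_pos hqpow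
      _ = C' := div_one _
      _ ≤ 1 := le_trans (min_le_left _ _) (min_le_left _ _)
      _ ≤ |ω⁻¹ - (p:ℝ)/(q:ℝ)| := hfar
  · push_neg at hfar
    by_cases hp0 : p = 0
    · subst hp0
      simp only [Int.cast_zero, zero_div, sub_zero]
      calc C' / (q:ℝ) ^ ((2:ℝ)+ν) ≤ C' / 1 := by
            apply div_le_div_of_nonneg_left (by positivity) one_pos hqpow
        _ = C' := div_one _
        _ ≤ |ω⁻¹| := le_trans (min_le_left _ _) (min_le_right _ _)
    · -- near case, p ≠ 0
      have hpabs : (0:ℝ) < |(p:ℝ)| := by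
        rw [abs_pos]; exact_mod_cast hp0
      have hpleM : |(p:ℝ)| ≤ (q:ℝ) * M := by
        have h1 : |(p:ℝ)/(q:ℝ)| ≤ |ω⁻¹| + 1 := by
          have := abs_sub_abs_le_abs_sub ((p:ℝ)/(q:ℝ)) ω⁻¹
          have h2 : |(p:ℝ)/(q:ℝ) - ω⁻¹| < 1 := by rwa [abs_sub_comm]
          linarith
        rw [abs_div, abs_of_pos hqR, div_le_iff₀ hqR] at h1
        rw [hM]; linarith [h1]
      -- express in terms of ω
      have hpR0 : (p:ℝ) ≠ 0 := by exact_mod_cast hp0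
      have hfrac : |ω⁻¹ - (p:ℝ)/(q:ℝ)| = (|(p:ℝ)| / ((q:ℝ) * |ω|)) * |ω - (q:ℝ)/(p:ℝ)| := by
        rw [show ω⁻¹ - (p:ℝ)/(q:ℝ) = -(((p:ℝ)/((q:ℝ)*ω)) * (ω - (q:ℝ)/(p:ℝ))) by
          field_simp; ring, abs_neg, abs_mul, abs_div, abs_mul, abs_of_pos hqR]
      -- apply hD with denominator |p|
      have hnatp : 0 < p.natAbs := Int.natAbs_pos.mpr hp0
      have hcast : ((p.natAbs : ℕ) : ℝ) = |(p:ℝ)| := by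
        rw [Nat.cast_natAbs, Int.cast_abs]
      set p' : ℤ := if 0 < p then (q:ℤ) else -(q:ℤ) with hp'
      have hqoverp : ((p' : ℝ))/((p.natAbs : ℕ) : ℝ) = (q:ℝ)/(p:ℝ) := by
        rw [hcast]
        rcases lt_or_gt_of_ne (show (p:ℝ) ≠ 0 by exact_mod_cast hp0) with hneg | hpos
        · have : ¬ (0 < p) := by intro hc; exact absurd (show (0:ℝ) < p by exact_mod_cast hc) (by linarith)
          rw [hp', if_neg this, abs_of_neg hneg]
          push_cast
          rw [div_neg, neg_div, neg_neg]
        · have : 0 < p := by exact_mod_cast hpos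
          rw [hp', if_pos this, abs_of_pos hpos]
          push_cast
          ring
      have hD' := hD p.natAbs p' hnatp
      rw [hqoverp, hcast] at hD'
      have hppow_pos : (0:ℝ) < |(p:ℝ)| ^ ((2:ℝ)+ν) := Real.rpow_pos_of_pos hpabs _
      have hstep : C / ((q:ℝ) * |ω| * |(p:ℝ)| ^ ((1:ℝ)+ν)) ≤ |ω⁻¹ - (p:ℝ)/(q:ℝ)| := by
        rw [hfrac]
        have h2 : (|(p:ℝ)| / ((q:ℝ) * |ω|)) * (C / |(p:ℝ)| ^ ((2:ℝ)+ν)) ≤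
            (|(p:ℝ)| / ((q:ℝ) * |ω|)) * |ω - (q:ℝ)/(p:ℝ)| := by
          apply mul_le_mul_of_nonneg_left hD' (by positivity)
        refine le_trans (le_of_eq ?_) h2
        have hsplit : |(p:ℝ)| ^ ((2:ℝ)+ν) = |(p:ℝ)| ^ ((1:ℝ)+ν) * |(p:ℝ)| := by
          rw [show ((2:ℝ)+ν) = ((1:ℝ)+ν) + 1 by ring]
          rw [Real.rpow_add hpabs ((1:ℝ)+ν) 1]
          try rw [Real.rpow_one]
        rw [hsplit]
        have hne1 : |(p:ℝ)| ^ ((1:ℝ)+ν) ≠ 0 := ne_of_gt (Real.rpow_pos_of_pos hpabs _)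
        field_simp
      refine le_trans ?_ hstep
      -- C'/q^{2+ν} ≤ C/(q |ω| |p|^{1+ν})
      have hple : |(p:ℝ)| ^ ((1:ℝ)+ν) ≤ (q:ℝ) ^ ((1:ℝ)+ν) * M ^ ((1:ℝ)+ν) := by
        rw [← Real.mul_rpow hqR.le hMpos.le]
        exact Real.rpow_le_rpow hpabs.le hpleM (by linarith)
      have hq2 : (q:ℝ) ^ ((2:ℝ)+ν) = (q:ℝ) * (q:ℝ) ^ ((1:ℝ)+ν) := by
        rw [show ((2:ℝ)+ν) = 1 + ((1:ℝ)+ν) by ring]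
        rw [Real.rpow_add hqR 1 ((1:ℝ)+ν)]
        try rw [Real.rpow_one]
      have hq1pow : (0:ℝ) < (q:ℝ) ^ ((1:ℝ)+ν) := Real.rpow_pos_of_pos hqR _
      have hC'le : C' ≤ C / (|ω| * M ^ ((1:ℝ)+ν)) := min_le_right _ _
      rw [div_le_div_iff₀ hqpow_pos (by positivity)]
      have hC'le2 : C' * (|ω| * M ^ ((1:ℝ)+ν)) ≤ C := (le_div_iff₀ (by positivity)).mp hC'le
      calc C' * ((q:ℝ) * |ω| * |(p:ℝ)| ^ ((1:ℝ)+ν))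
          ≤ C' * ((q:ℝ) * |ω| * ((q:ℝ) ^ ((1:ℝ)+ν) * M ^ ((1:ℝ)+ν))) := by
            apply mul_le_mul_of_nonneg_left ?_ hC'pos.le
            apply mul_le_mul_of_nonneg_left hple (by positivity)
        _ = (C' * (|ω| * M ^ ((1:ℝ)+ν))) * ((q:ℝ) * (q:ℝ) ^ ((1:ℝ)+ν)) := by ring
        _ ≤ C * ((q:ℝ) * (q:ℝ) ^ ((1:ℝ)+ν)) :=
            mul_le_mul_of_nonneg_right hC'le2 (by positivity)
        _ = C * (q:ℝ) ^ ((2:ℝ)+ν) := by rw [hq2]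

private lemma conclusion_from_bound {E : Type*} [NormedAddCommGroup E] (u : ℝ → E)
    (e K ε₁ : ℝ) (he : 0 ≤ e) (hK : 0 < K) (hε₁ : 0 < ε₁)
    (H : ∀ ε : ℝ, 0 < ε → ε < ε₁ → IsInclusionLength u ε (K * (1/ε) ^ e)) :
    (∃ K' > 0, ∃ ε₁' > 0, ∀ ε : ℝ, 0 < ε → ε < ε₁' → inclusionLength u ε ≤ K' * (1/ε) ^ e) ∧
      diophDim u ≤ e := by
  have hbddB : ∀ ε : ℝ, BddBelow {L | IsInclusionLength u ε L} :=
    fun ε => ⟨0, fun L hL => hL.1.le⟩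
  have hbound : ∀ ε : ℝ, 0 < ε → ε < ε₁ → inclusionLength u ε ≤ K * (1/ε) ^ e := by
    intro ε h0 h1
    exact csInf_le (hbddB ε) (H ε h0 h1)
  have hnonneg : ∀ ε : ℝ, 0 ≤ inclusionLength u ε := by
    intro ε
    exact Real.sInf_nonneg (fun L hL => hL.1.le)
  refine ⟨⟨K, hK, ε₁, hε₁, hbound⟩, ?_⟩
  rw [diophDim, Filter.limsup_eq]
  have hmem : ∀ b : ℝ, e < b →
      (∀ᶠ ε in nhdsWithin (0:ℝ) (Set.Ioi 0),
        Real.log (inclusionLength u ε) / Real.log (1 / ε) ≤ b) := by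
    intro b hb
    have hbe : 0 < b - e := by linarith
    set c := min (min ε₁ 1) (Real.exp (-(max 0 (Real.log K) / (b - e)))) with hc
    have hcpos : 0 < c := by
      apply lt_min (lt_min hε₁ one_pos) (Real.exp_pos _)
    filter_upwards [Ioo_mem_nhdsGT_of_mem (show (0:ℝ) ∈ Set.Ico 0 c from ⟨le_rfl, hcpos⟩)]
      with ε hε
    obtain ⟨hε0, hεc⟩ := hε
    have hε1' : ε < ε₁ := lt_of_lt_of_le hεc (le_trans (min_le_left _ _) (min_le_left _ _))
    have hεlt1 : ε < 1 := lt_of_lt_of_le hεc (le_trans (min_le_left _ _) (min_le_right _ _))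
    have hinv1 : 1 < 1/ε := by rw [lt_div_iff₀ hε0]; linarith
    have hlogpos : 0 < Real.log (1/ε) := Real.log_pos hinv1
    by_cases hl1 : inclusionLength u ε ≤ 1
    · have hlog0 : Real.log (inclusionLength u ε) ≤ 0 := Real.log_nonpos (hnonneg ε) hl1
      calc Real.log (inclusionLength u ε) / Real.log (1/ε) ≤ 0 :=
            div_nonpos_of_nonpos_of_nonneg hlog0 hlogpos.le
        _ ≤ b := by linarith
    · push_neg at hl1
      have hlle : inclusionLength u ε ≤ K * (1/ε) ^ e := hbound ε hε0 hε1'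
      have hrpow_pos : (0:ℝ) < (1/ε) ^ e := Real.rpow_pos_of_pos (by positivity) _
      have hKe : Real.log (inclusionLength u ε) ≤ Real.log K + e * Real.log (1/ε) := by
        calc Real.log (inclusionLength u ε) ≤ Real.log (K * (1/ε) ^ e) :=
              Real.log_le_log (by linarith) hlle
          _ = Real.log K + Real.log ((1/ε) ^ e) := Real.log_mul (ne_of_gt hK) (ne_of_gt hrpow_pos)
          _ = Real.log K + e * Real.log (1/ε) := by rw [Real.log_rpow (by positivity)]
      rw [div_le_iff₀ hlogpos]
      have hlogK : Real.log K ≤ (b - e) * Real.log (1/ε) := by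
        have hεexp : ε < Real.exp (-(max 0 (Real.log K) / (b - e))) :=
          lt_of_lt_of_le hεc (min_le_right _ _)
        have hlt := Real.log_lt_log hε0 hεexp
        rw [Real.log_exp] at hlt
        have hloginv : max 0 (Real.log K) / (b - e) < Real.log (1/ε) := by
          rw [one_div, Real.log_inv]
          linarith
        calc Real.log K ≤ max 0 (Real.log K) := le_max_right _ _
          _ = (max 0 (Real.log K) / (b - e)) * (b - e) := by field_simp
          _ ≤ Real.log (1/ε) * (b - e) := mul_le_mul_of_nonneg_right hloginv.le hbe.le
          _ = (b - e) * Real.log (1/ε) := mul_comm _ _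
      linarith
  by_cases hbdd : BddBelow {a : ℝ | ∀ᶠ ε in nhdsWithin (0:ℝ) (Set.Ioi 0),
      Real.log (inclusionLength u ε) / Real.log (1 / ε) ≤ a}
  · apply le_of_forall_gt_imp_ge_of_dense
    intro b hb
    exact csInf_le hbdd (hmem b hb)
  · rw [Real.sInf_of_not_bddBelow hbdd]
    exact he

private lemma rpow_delta_eq {ε Ch α ν : ℝ} (hε : 0 < ε) (hCh : 0 < Ch) (hα : 0 < α)
    (hν : 0 ≤ ν) :
    (1 / ((ε/Ch) ^ (1/α : ℝ))) ^ ((1:ℝ)+ν) = Ch ^ ((1+ν)/α) * (1/ε) ^ ((1+ν)/α) := by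
  have hdiv : (0:ℝ) < ε/Ch := div_pos hε hCh
  have h1 : (1 / ((ε/Ch) ^ (1/α : ℝ))) = (Ch/ε) ^ (1/α : ℝ) := by
    rw [one_div, ← Real.inv_rpow hdiv.le, inv_div]
  rw [h1, ← Real.rpow_mul (by positivity : (0:ℝ) ≤ Ch/ε)]
  rw [show (1/α) * ((1:ℝ)+ν) = (1+ν)/α by ring]
  rw [show Ch/ε = Ch * (1/ε) by ring]
  rw [Real.mul_rpow hCh.le (by positivity)]

private lemma delta_props {ε Ch α m0 : ℝ} (hε : 0 < ε) (hCh : 0 < Ch) (hα : 0 < α)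
    (hm0 : 0 < m0) (hεlt : ε < Ch * m0 ^ α) :
    0 < (ε/Ch) ^ (1/α : ℝ) ∧ (ε/Ch) ^ (1/α : ℝ) < m0 ∧
      Ch * ((ε/Ch) ^ (1/α : ℝ)) ^ α = ε := by
  have hdiv : (0:ℝ) < ε/Ch := div_pos hε hCh
  refine ⟨Real.rpow_pos_of_pos hdiv _, ?_, ?_⟩
  · have h1 : ε/Ch < m0 ^ α := by rw [div_lt_iff₀ hCh]; linarith
    calc (ε/Ch) ^ (1/α : ℝ) < (m0 ^ α) ^ (1/α : ℝ) :=
          Real.rpow_lt_rpow hdiv.le h1 (by positivity)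
      _ = m0 := by
          rw [← Real.rpow_mul hm0.le, mul_one_div, div_self (ne_of_gt hα), Real.rpow_one]
  · rw [← Real.rpow_mul hdiv.le, one_div_mul_cancel (ne_of_gt hα), Real.rpow_one]
    field_simp

/-- If `ω` is irrational with the `G`-property and the Diophantine condition of order `ν`,
and `u(t) = h(ωt, t)` with `h` 1-periodic in each variable and locally Hölder with
exponents `α₁, α₂` in the two variables, then with `α = max{α₁, α₂}` there is `K > 0` so
that `l_u(ε) ≤ K(1/ε)^{(1+ν)/α}` for all small `ε > 0`; in particular
`𝔇𝔦(u) ≤ (1+ν)/α`. -/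
theorem diophDim_quasiperiodic_upper {E : Type*} [NormedAddCommGroup E]
    (ω : ℝ) (hω : Irrational ω) (ν : ℝ) (hν : 0 ≤ ν)
    (hG : GProperty ω) (hD : DiophCond ω ν)
    (h : ℝ → ℝ → E) (hcont : Continuous fun p : ℝ × ℝ => h p.1 p.2)
    (hper1 : ∀ t s : ℝ, h (t + 1) s = h t s) (hper2 : ∀ t s : ℝ, h t (s + 1) = h t s)
    (Ch ε₀ α₁ α₂ : ℝ) (hCh : 0 < Ch) (hε₀ : 0 < ε₀)
    (hα₁ : α₁ ∈ Set.Ioc (0 : ℝ) 1) (hα₂ : α₂ ∈ Set.Ioc (0 : ℝ) 1)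
    (hH1 : ∀ t₁ t₂ s : ℝ, |t₁ - t₂| ≤ ε₀ → ‖h t₁ s - h t₂ s‖ ≤ Ch * |t₁ - t₂| ^ α₁)
    (hH2 : ∀ t s₁ s₂ : ℝ, |s₁ - s₂| ≤ ε₀ → ‖h t s₁ - h t s₂‖ ≤ Ch * |s₁ - s₂| ^ α₂)
    (u : ℝ → E) (hu : ∀ t : ℝ, u t = h (ω * t) t) :
    (∃ K > 0, ∃ ε₁ > 0, ∀ ε : ℝ, 0 < ε → ε < ε₁ →
        inclusionLength u ε ≤ K * (1 / ε) ^ ((1 + ν) / max α₁ α₂)) ∧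
      diophDim u ≤ (1 + ν) / max α₁ α₂ := by
  obtain ⟨C, hCpos, hDC⟩ := hD
  obtain ⟨hα₁0, hα₁1⟩ := hα₁
  obtain ⟨hα₂0, hα₂1⟩ := hα₂
  have hper1' : ∀ (m : ℤ) (x s : ℝ), h (x + m) s = h x s := fun m x s =>
    periodic_int_shift (fun y => h y s) (fun t => hper1 t s) m x
  have hper2' : ∀ (m : ℤ) (x s : ℝ), h x (s + m) = h x s := fun m x s =>
    periodic_int_shift (fun y => h x y) (fun t => hper2 x t) m s
  have hm0pos : (0:ℝ) < min ε₀ (1/2) := lt_min hε₀ (by norm_num)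
  rcases le_total α₂ α₁ with hmax | hmax
  · -- α = α₁ : use integer almost periods
    rw [max_eq_left hmax]
    obtain ⟨K₀, hK₀pos, hdense⟩ := dense_small_norm ω hω ν hν C hCpos hDC
    have hepos : 0 ≤ (1+ν)/α₁ := div_nonneg (by linarith) hα₁0.le
    refine conclusion_from_bound u ((1+ν)/α₁) (K₀ * Ch ^ ((1+ν)/α₁))
      (Ch * (min ε₀ (1/2)) ^ α₁) hepos (by positivity) (by positivity) ?_
    intro ε hε0 hεlt
    obtain ⟨hδpos, hδm, hδε⟩ := delta_props hε0 hCh hα₁0 hm0pos hεlt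
    set δ := (ε/Ch) ^ (1/α₁ : ℝ) with hδ
    have hKeq : (K₀ * Ch ^ ((1+ν)/α₁)) * (1/ε) ^ ((1+ν)/α₁) = K₀ * (1/δ) ^ ((1:ℝ)+ν) := by
      rw [hδ, rpow_delta_eq hε0 hCh hα₁0 hν]; ring
    rw [hKeq]
    refine ⟨by positivity, ?_⟩
    intro a
    obtain ⟨n, hn1, hn2, hn3⟩ := hdense δ hδpos (le_trans hδm.le (min_le_right _ _)) a
    refine ⟨(n:ℝ), ⟨hn1, hn2⟩, ?_⟩
    intro t
    rw [hu (t + (n:ℝ)), hu t]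
    have e1 : ω * (t + (n:ℝ)) = ω*t + (n:ℝ)*ω := by ring
    rw [e1, hper2' n (ω*t + (n:ℝ)*ω) t]
    have e2 : ω*t + (n:ℝ)*ω
        = (ω*t + ((n:ℝ)*ω - round ((n:ℝ)*ω))) + ((round ((n:ℝ)*ω) : ℤ) : ℝ) := by
      push_cast; ring
    rw [e2, hper1' (round ((n:ℝ)*ω)) (ω*t + ((n:ℝ)*ω - round ((n:ℝ)*ω))) t]
    have habs : |ω*t + ((n:ℝ)*ω - round ((n:ℝ)*ω)) - ω*t| = |(n:ℝ)*ω - round ((n:ℝ)*ω)| := by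
      congr 1; ring
    have hδε₀ : δ ≤ ε₀ := le_trans hδm.le (min_le_left _ _)
    calc ‖h (ω*t + ((n:ℝ)*ω - round ((n:ℝ)*ω))) t - h (ω*t) t‖
        ≤ Ch * |ω*t + ((n:ℝ)*ω - round ((n:ℝ)*ω)) - ω*t| ^ α₁ :=
          hH1 _ _ t (by rw [habs]; exact le_trans hn3 hδε₀)
      _ = Ch * |(n:ℝ)*ω - round ((n:ℝ)*ω)| ^ α₁ := by rw [habs]
      _ ≤ Ch * δ ^ α₁ :=
          mul_le_mul_of_nonneg_left (Real.rpow_le_rpow (abs_nonneg _) hn3 hα₁0.le) hCh.le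
      _ = ε := hδε
  · -- α = α₂ : use almost periods of the form n/ω
    rw [max_eq_right hmax]
    have hω0 : ω ≠ 0 := hω.ne_zero
    have hωinv : Irrational ω⁻¹ := hω.inv
    obtain ⟨C', hC'pos, hDC'⟩ := dioph_inv hω hν hCpos hDC
    obtain ⟨K₀, hK₀pos, hdense⟩ := dense_small_norm ω⁻¹ hωinv ν hν C' hC'pos hDC'
    have hWpos : (0:ℝ) < |ω⁻¹| := abs_pos.mpr (inv_ne_zero hω0)
    have hepos : 0 ≤ (1+ν)/α₂ := div_nonneg (by linarith) hα₂0.le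
    refine conclusion_from_bound u ((1+ν)/α₂) (K₀ * |ω⁻¹| * Ch ^ ((1+ν)/α₂))
      (Ch * (min ε₀ (1/2)) ^ α₂) hepos (by positivity) (by positivity) ?_
    intro ε hε0 hεlt
    obtain ⟨hδpos, hδm, hδε⟩ := delta_props hε0 hCh hα₂0 hm0pos hεlt
    set δ := (ε/Ch) ^ (1/α₂ : ℝ) with hδ
    have hKeq : (K₀ * |ω⁻¹| * Ch ^ ((1+ν)/α₂)) * (1/ε) ^ ((1+ν)/α₂)
        = (K₀ * (1/δ) ^ ((1:ℝ)+ν)) * |ω⁻¹| := by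
      rw [hδ, rpow_delta_eq hε0 hCh hα₂0 hν]; ring
    rw [hKeq]
    have hδε₀ : δ ≤ ε₀ := le_trans hδm.le (min_le_left _ _)
    have hδhalf : δ ≤ 1/2 := le_trans hδm.le (min_le_right _ _)
    have hAP : ∀ n : ℤ, |(n:ℝ)*ω⁻¹ - round ((n:ℝ)*ω⁻¹)| ≤ δ →
        IsAlmostPeriod u ε ((n:ℝ)*ω⁻¹) := by
      intro n hn3 t
      rw [hu (t + (n:ℝ)*ω⁻¹), hu t]
      have e1 : ω * (t + (n:ℝ)*ω⁻¹) = ω*t + (n:ℝ) := by field_simp; try ring; try ring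
      rw [e1, hper1' n (ω*t) (t + (n:ℝ)*ω⁻¹)]
      have e2 : t + (n:ℝ)*ω⁻¹
          = (t + ((n:ℝ)*ω⁻¹ - round ((n:ℝ)*ω⁻¹))) + ((round ((n:ℝ)*ω⁻¹) : ℤ) : ℝ) := by
        push_cast; ring
      rw [e2, hper2' (round ((n:ℝ)*ω⁻¹)) (ω*t) (t + ((n:ℝ)*ω⁻¹ - round ((n:ℝ)*ω⁻¹)))]
      have habs : |t + ((n:ℝ)*ω⁻¹ - round ((n:ℝ)*ω⁻¹)) - t|
          = |(n:ℝ)*ω⁻¹ - round ((n:ℝ)*ω⁻¹)| := by congr 1; ring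
      calc ‖h (ω*t) (t + ((n:ℝ)*ω⁻¹ - round ((n:ℝ)*ω⁻¹))) - h (ω*t) t‖
          ≤ Ch * |t + ((n:ℝ)*ω⁻¹ - round ((n:ℝ)*ω⁻¹)) - t| ^ α₂ :=
            hH2 _ _ _ (by rw [habs]; exact le_trans hn3 hδε₀)
        _ = Ch * |(n:ℝ)*ω⁻¹ - round ((n:ℝ)*ω⁻¹)| ^ α₂ := by rw [habs]
        _ ≤ Ch * δ ^ α₂ :=
            mul_le_mul_of_nonneg_left (Real.rpow_le_rpow (abs_nonneg _) hn3 hα₂0.le) hCh.le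
        _ = ε := hδε
    refine ⟨by positivity, ?_⟩
    intro a
    rcases lt_or_gt_of_ne hω0 with hwneg | hwpos
    · -- ω < 0
      have hωinv_neg : ω⁻¹ < 0 := inv_lt_zero.mpr hwneg
      have hWeq : |ω⁻¹| = -ω⁻¹ := abs_of_neg hωinv_neg
      obtain ⟨n, hn1, hn2, hn3⟩ := hdense δ hδpos hδhalf
        (ω * (a + (K₀ * (1/δ) ^ ((1:ℝ)+ν)) * |ω⁻¹|))
      refine ⟨(n:ℝ)*ω⁻¹, ⟨?_, ?_⟩, hAP n hn3⟩
      · have hsum : ω * (a + (K₀ * (1/δ) ^ ((1:ℝ)+ν)) * |ω⁻¹|) + K₀ * (1/δ) ^ ((1:ℝ)+ν)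
            = ω * a := by
          rw [hWeq]; field_simp; try ring
        have hnle : (n:ℝ) ≤ ω * a := by rw [← hsum]; exact hn2
        have h1 : (ω * a) * ω⁻¹ ≤ (n:ℝ) * ω⁻¹ :=
          mul_le_mul_of_nonpos_right hnle hωinv_neg.le
        have h2 : (ω * a) * ω⁻¹ = a := by field_simp; try ring; try ring
        linarith
      · have h1 : (n:ℝ) * ω⁻¹ ≤ (ω * (a + (K₀ * (1/δ) ^ ((1:ℝ)+ν)) * |ω⁻¹|)) * ω⁻¹ :=
          mul_le_mul_of_nonpos_right hn1 hωinv_neg.le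
        have h2 : (ω * (a + (K₀ * (1/δ) ^ ((1:ℝ)+ν)) * |ω⁻¹|)) * ω⁻¹
            = a + (K₀ * (1/δ) ^ ((1:ℝ)+ν)) * |ω⁻¹| := by field_simp; try ring; try ring
        linarith
    · -- ω > 0
      have hωinv_pos : 0 < ω⁻¹ := inv_pos.mpr hwpos
      have hWeq : |ω⁻¹| = ω⁻¹ := abs_of_pos hωinv_pos
      obtain ⟨n, hn1, hn2, hn3⟩ := hdense δ hδpos hδhalf (ω * a)
      refine ⟨(n:ℝ)*ω⁻¹, ⟨?_, ?_⟩, hAP n hn3⟩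
      · have h1 : (ω*a) * ω⁻¹ ≤ (n:ℝ) * ω⁻¹ :=
          mul_le_mul_of_nonneg_right hn1 hωinv_pos.le
        have h2 : (ω * a) * ω⁻¹ = a := by field_simp; try ring; try ring
        linarith
      · have h1 : (n:ℝ) * ω⁻¹ ≤ (ω*a + K₀ * (1/δ) ^ ((1:ℝ)+ν)) * ω⁻¹ :=
          mul_le_mul_of_nonneg_right hn2 hωinv_pos.le
        have h2 : (ω*a + K₀ * (1/δ) ^ ((1:ℝ)+ν)) * ω⁻¹
            = a + (K₀ * (1/δ) ^ ((1:ℝ)+ν)) * ω⁻¹ := by field_simp; try ring; try ring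
        rw [hWeq]
        linarith
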